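/- For every integer n ≥ 2, the constant (π·Γ((n−1)/2)/(2π^{(n+1)/2})) · n^{1/n} · (2π^{n/2}/Γ(n/2))^{(n−1)/n} is at most n/(n−1). Equivalently, Γ((n−1)/2)·(2π^{n/2}/Γ(n/2))^{(n−1)/n}·n^{1/n} / (2π^{(n−1)/2}) ≤ n/(n−1). -/

import Mathlib

open Real
/-- For every integer `n ≥ 2`,
`(π·Γ((n−1)/2)/(2π^{(n+1)/2})) · n^{1/n} · (2π^{n/2}/Γ(n/2))^{(n−1)/n} ≤ n/(n−1)`. -/
theorem stmt_11 (n : ℕ) (hn : 2 ≤ n) :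
    Real.pi * Real.Gamma (((n : ℝ) - 1) / 2) /
        (2 * Real.pi ^ (((n : ℝ) + 1) / 2)) *
      ((n : ℝ) ^ (1 / (n : ℝ)) *
        (2 * Real.pi ^ ((n : ℝ) / 2) / Real.Gamma ((n : ℝ) / 2)) ^
          (((n : ℝ) - 1) / n)) ≤ (n : ℝ) / ((n : ℝ) - 1) := by
  set s : ℝ := (n : ℝ) with hs_def
  have hs : (2:ℝ) ≤ s := by rw [hs_def]; exact_mod_cast hn
  have hs0 : 0 < s := by linarith
  have hs1 : 0 < s - 1 := by linarith
  have hπ : 0 < Real.pi := Real.pi_pos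
  have hΓ1 : 0 < Real.Gamma ((s - 1) / 2) := Real.Gamma_pos_of_pos (by linarith)
  have hΓ2 : 0 < Real.Gamma (s / 2) := Real.Gamma_pos_of_pos (by linarith)
  -- convexity step
  have key : Real.log ((s-1)/2) + Real.log (Real.Gamma ((s-1)/2)) ≤
      (s-1)/s * (Real.log (s/2) + Real.log (Real.Gamma (s/2))) := by
    have hconv := Real.convexOn_log_Gamma.2 (Set.mem_Ioi.mpr (one_pos : (0:ℝ) < 1))
      (Set.mem_Ioi.mpr (show (0:ℝ) < (s+2)/2 by linarith))
      (show (0:ℝ) ≤ 1/s by positivity) (show (0:ℝ) ≤ (s-1)/s by positivity)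
      (show 1/s + (s-1)/s = 1 by field_simp; ring)
    have hxy : (1/s) • (1:ℝ) + ((s-1)/s) • ((s+2)/2) = (s+1)/2 := by
      simp only [smul_eq_mul]; field_simp; ring
    rw [hxy] at hconv
    simp only [Function.comp_apply, smul_eq_mul, Real.Gamma_one, Real.log_one,
      mul_zero, zero_add] at hconv
    have e1 : Real.Gamma ((s+1)/2) = ((s-1)/2) * Real.Gamma ((s-1)/2) := by
      have h : (s+1)/2 = (s-1)/2 + 1 := by ring
      rw [h, Real.Gamma_add_one (by positivity)]
    have e2 : Real.Gamma ((s+2)/2) = (s/2) * Real.Gamma (s/2) := by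
      have h : (s+2)/2 = s/2 + 1 := by ring
      rw [h, Real.Gamma_add_one (by positivity)]
    rw [e1, e2] at hconv
    rw [Real.log_mul (by positivity) (ne_of_gt hΓ1),
        Real.log_mul (by positivity) (ne_of_gt hΓ2)] at hconv
    linarith
  have hLpos : 0 < Real.pi * Real.Gamma ((s - 1) / 2) / (2 * Real.pi ^ ((s + 1) / 2)) *
      (s ^ (1 / s) * (2 * Real.pi ^ (s / 2) / Real.Gamma (s / 2)) ^ ((s - 1) / s)) := by
    positivity
  have hRpos : (0:ℝ) < s / (s - 1) := by positivity
  rw [← Real.log_le_log_iff hLpos hRpos]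
  have expand : Real.log (Real.pi * Real.Gamma ((s - 1) / 2) / (2 * Real.pi ^ ((s + 1) / 2)) *
      (s ^ (1 / s) * (2 * Real.pi ^ (s / 2) / Real.Gamma (s / 2)) ^ ((s - 1) / s)))
      = Real.log Real.pi + Real.log (Real.Gamma ((s-1)/2))
        - (Real.log 2 + (s+1)/2 * Real.log Real.pi)
        + (1/s * Real.log s + (s-1)/s * (Real.log 2 + s/2 * Real.log Real.pi
            - Real.log (Real.Gamma (s/2)))) := by
    rw [Real.log_mul (ne_of_gt (by positivity)) (ne_of_gt (by positivity)),
        Real.log_div (ne_of_gt (by positivity)) (ne_of_gt (by positivity)),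
        Real.log_mul (ne_of_gt hπ) (ne_of_gt hΓ1),
        Real.log_mul (two_ne_zero) (ne_of_gt (by positivity)),
        Real.log_rpow hπ,
        Real.log_mul (ne_of_gt (by positivity)) (ne_of_gt (by positivity)),
        Real.log_rpow hs0,
        Real.log_rpow (show (0:ℝ) < 2 * Real.pi ^ (s/2) / Real.Gamma (s/2) by positivity),
        Real.log_div (ne_of_gt (by positivity)) (ne_of_gt hΓ2),
        Real.log_mul (two_ne_zero) (ne_of_gt (by positivity)),
        Real.log_rpow hπ]
  rw [expand, Real.log_div (ne_of_gt hs0) (ne_of_gt hs1)]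
  rw [Real.log_div (ne_of_gt hs1) (two_ne_zero), Real.log_div (ne_of_gt hs0) (two_ne_zero)] at key
  have hid : Real.log Real.pi + Real.log (Real.Gamma ((s-1)/2))
        - (Real.log 2 + (s+1)/2 * Real.log Real.pi)
        + (1/s * Real.log s + (s-1)/s * (Real.log 2 + s/2 * Real.log Real.pi
            - Real.log (Real.Gamma (s/2))))
      - (Real.log s - Real.log (s-1))
      = (Real.log (s-1) - Real.log 2 + Real.log (Real.Gamma ((s-1)/2)))
      - (s-1)/s * (Real.log s - Real.log 2 + Real.log (Real.Gamma (s/2))) := by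
    field_simp
    ring
  linarith [key, hid]
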